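/- For every k ≥ 2, the number of Baxter matrices with 2 rows and k columns equals k² + 3k − 4. -/
import Mathlib


/-- A Baxter matrix: a 0-1 matrix (encoded with `Bool`) such that every row and
every column contains a 1, and every clockwise and counter-clockwise pinwheel
contains an all-zero segment. -/
def IsBaxter (m n : ℕ) (M : Fin m → Fin n → Bool) : Prop :=
  (∀ i : Fin m, ∃ j : Fin n, M i j = true) ∧
  (∀ j : Fin n, ∃ i : Fin m, M i j = true) ∧
  -- clockwise pinwheels
  (∀ i j : ℕ, ∀ hi : i + 1 < m, ∀ hj : j + 1 < n,
    (∀ j' : Fin n, (j' : ℕ) ≤ j → M ⟨i, Nat.lt_of_succ_lt hi⟩ j' = false) ∨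
    (∀ i' : Fin m, (i' : ℕ) ≤ i → M i' ⟨j + 1, hj⟩ = false) ∨
    (∀ j' : Fin n, j + 1 ≤ (j' : ℕ) → M ⟨i + 1, hi⟩ j' = false) ∨
    (∀ i' : Fin m, i + 1 ≤ (i' : ℕ) → M i' ⟨j, Nat.lt_of_succ_lt hj⟩ = false)) ∧
  -- counter-clockwise pinwheels
  (∀ i j : ℕ, ∀ hi : i + 1 < m, ∀ hj : j + 1 < n,
    (∀ j' : Fin n, (j' : ℕ) ≤ j → M ⟨i + 1, hi⟩ j' = false) ∨
    (∀ i' : Fin m, (i' : ℕ) ≤ i → M i' ⟨j, Nat.lt_of_succ_lt hj⟩ = false) ∨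
    (∀ j' : Fin n, j + 1 ≤ (j' : ℕ) → M ⟨i, Nat.lt_of_succ_lt hi⟩ j' = false) ∨
    (∀ i' : Fin m, i + 1 ≤ (i' : ℕ) → M i' ⟨j + 1, hj⟩ = false))

/-- The number of entries equal to 1 in the matrix. -/
def onesCount (m n : ℕ) (M : Fin m → Fin n → Bool) : ℕ :=
  (Finset.univ.filter (fun p : Fin m × Fin n => M p.1 p.2 = true)).card

/-- The number of Baxter matrices with `r` rows and `k` columns. -/
noncomputable def baxterCount (r k : ℕ) : ℕ :=
  Nat.card {M : Fin r → Fin k → Bool // IsBaxter r k M}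

/-- The number of Baxter matrices with `r` rows and `k` columns having exactly
`t` entries equal to 1. -/
noncomputable def baxterCountOnes (r k t : ℕ) : ℕ :=
  Nat.card {M : Fin r → Fin k → Bool // IsBaxter r k M ∧ onesCount r k M = t}

theorem isBaxter_two_iff {k : ℕ} (M : Fin 2 → Fin k → Bool) :
  IsBaxter 2 k M ↔
    (∃ j : Fin k, M 0 j = true) ∧ (∃ j : Fin k, M 1 j = true) ∧
    (∀ j : Fin k, M 0 j = true ∨ M 1 j = true) ∧
    (∀ j : ℕ, ∀ hj : j + 1 < k,
      (∀ j' : Fin k, (j' : ℕ) ≤ j → M 0 j' = false) ∨ (M 0 ⟨j+1, hj⟩ = false) ∨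
      (∀ j' : Fin k, j + 1 ≤ (j' : ℕ) → M 1 j' = false) ∨ (M 1 ⟨j, Nat.lt_of_succ_lt hj⟩ = false)) ∧
    (∀ j : ℕ, ∀ hj : j + 1 < k,
      (∀ j' : Fin k, (j' : ℕ) ≤ j → M 1 j' = false) ∨ (M 0 ⟨j, Nat.lt_of_succ_lt hj⟩ = false) ∨
      (∀ j' : Fin k, j + 1 ≤ (j' : ℕ) → M 0 j' = false) ∨ (M 1 ⟨j+1, hj⟩ = false)) := by
  constructor
  · rintro ⟨h1, h2, h3, h4⟩
    refine ⟨h1 0, h1 1, ?_, ?_, ?_⟩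
    · intro j
      obtain ⟨i, hi⟩ := h2 j
      fin_cases i
      · exact Or.inl hi
      · exact Or.inr hi
    · intro j hj
      rcases h3 0 j (by norm_num) hj with h | h | h | h
      · exact Or.inl h
      · exact Or.inr (Or.inl (h 0 (by norm_num)))
      · exact Or.inr (Or.inr (Or.inl h))
      · exact Or.inr (Or.inr (Or.inr (h 1 (by norm_num))))
    · intro j hj
      rcases h4 0 j (by norm_num) hj with h | h | h | h
      · exact Or.inl h
      · exact Or.inr (Or.inl (h 0 (by norm_num)))
      · exact Or.inr (Or.inr (Or.inl h))
      · exact Or.inr (Or.inr (Or.inr (h 1 (by norm_num))))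
  · rintro ⟨h1, h2, h3, h4, h5⟩
    refine ⟨?_, ?_, ?_, ?_⟩
    · intro i; fin_cases i
      · exact h1
      · exact h2
    · intro j
      rcases h3 j with h | h
      · exact ⟨0, h⟩
      · exact ⟨1, h⟩
    · intro i j hi hj
      have hi0 : i = 0 := by omega
      subst hi0
      rcases h4 j hj with h | h | h | h
      · exact Or.inl h
      · refine Or.inr (Or.inl fun i' hi' => ?_)
        have : i' = 0 := Fin.ext (by omega)
        subst this; exact h
      · exact Or.inr (Or.inr (Or.inl h))
      · refine Or.inr (Or.inr (Or.inr fun i' hi' => ?_))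
        have : i' = 1 := Fin.ext (by omega)
        subst this; exact h
    · intro i j hi hj
      have hi0 : i = 0 := by omega
      subst hi0
      rcases h5 j hj with h | h | h | h
      · exact Or.inl h
      · refine Or.inr (Or.inl fun i' hi' => ?_)
        have : i' = 0 := Fin.ext (by omega)
        subst this; exact h
      · exact Or.inr (Or.inr (Or.inl h))
      · refine Or.inr (Or.inr (Or.inr fun i' hi' => ?_))
        have : i' = 1 := Fin.ext (by omega)
        subst this; exact h
-- families
def famA (k s e : ℕ) : Fin 2 → Fin k → Bool :=
  fun i j => if i.val = 0 then decide (s ≤ j.val ∧ j.val < e) else !decide (s ≤ j.val ∧ j.val < e)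
def famB (k s e : ℕ) : Fin 2 → Fin k → Bool :=
  fun i j => if i.val = 0 then !decide (s ≤ j.val ∧ j.val < e) else decide (s ≤ j.val ∧ j.val < e)
def famC (k p : ℕ) : Fin 2 → Fin k → Bool :=
  fun i j => if i.val = 0 then true else decide (j.val = p)
def famD (k p : ℕ) : Fin 2 → Fin k → Bool :=
  fun i j => if i.val = 0 then decide (j.val = p) else true
def famE (k p : ℕ) : Fin 2 → Fin k → Bool :=
  fun i j => if i.val = 0 then decide (j.val ≤ p) else decide (p ≤ j.val)
def famF (k p : ℕ) : Fin 2 → Fin k → Bool :=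
  fun i j => if i.val = 0 then decide (p ≤ j.val) else decide (j.val ≤ p)

example (k : ℕ) (j : Fin k) : famA k 1 2 0 j = decide (1 ≤ j.val ∧ j.val < 2) := by
  simp [famA]

theorem isBaxter_famA {k s e : ℕ} (hs : 1 ≤ s) (hse : s < e) (hek : e ≤ k) :
    IsBaxter 2 k (famA k s e) := by
  rw [isBaxter_two_iff]
  refine ⟨⟨⟨s, by omega⟩, by simp [famA]; omega⟩, ⟨⟨0, by omega⟩, by simp [famA]; omega⟩, ?_, ?_, ?_⟩
  · intro j
    by_cases h : s ≤ j.val ∧ j.val < e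
    · exact Or.inl (by simp [famA, h])
    · exact Or.inr (by simp [famA]; omega)
  · intro j hj
    rcases Nat.lt_or_ge j s with h | h
    · exact Or.inl fun j' hj' => by simp [famA]; omega
    · rcases Nat.lt_or_ge j e with h2 | h2
      · exact Or.inr (Or.inr (Or.inr (by simp [famA]; omega)))
      · exact Or.inr (Or.inl (by simp [famA]; omega))
  · intro j hj
    rcases Nat.lt_or_ge j s with h | h
    · exact Or.inr (Or.inl (by simp [famA]; omega))
    · rcases Nat.lt_or_ge (j+1) e with h2 | h2
      · exact Or.inr (Or.inr (Or.inr (by simp [famA]; omega)))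
      · exact Or.inr (Or.inr (Or.inl fun j' hj' => by simp [famA]; omega))

theorem isBaxter_famB {k s e : ℕ} (hs : 1 ≤ s) (hse : s < e) (hek : e ≤ k) :
    IsBaxter 2 k (famB k s e) := by
  rw [isBaxter_two_iff]
  refine ⟨⟨⟨0, by omega⟩, by simp [famB]; omega⟩, ⟨⟨s, by omega⟩, by simp [famB]; omega⟩, ?_, ?_, ?_⟩
  · intro j
    by_cases h : s ≤ j.val ∧ j.val < e
    · exact Or.inr (by simp [famB, h])
    · exact Or.inl (by simp [famB]; omega)
  · intro j hj
    rcases Nat.lt_or_ge j s with h | h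
    · exact Or.inr (Or.inr (Or.inr (by simp [famB]; omega)))
    · rcases Nat.lt_or_ge (j+1) e with h2 | h2
      · exact Or.inr (Or.inl (by simp [famB]; omega))
      · exact Or.inr (Or.inr (Or.inl fun j' hj' => by simp [famB]; omega))
  · intro j hj
    rcases Nat.lt_or_ge j s with h | h
    · exact Or.inl fun j' hj' => by simp [famB]; omega
    · rcases Nat.lt_or_ge j e with h2 | h2
      · exact Or.inr (Or.inl (by simp [famB]; omega))
      · exact Or.inr (Or.inr (Or.inr (by simp [famB]; omega)))

theorem isBaxter_famC {k p : ℕ} (hp : p < k) : IsBaxter 2 k (famC k p) := by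
  rw [isBaxter_two_iff]
  refine ⟨⟨⟨0, by omega⟩, by simp [famC]⟩, ⟨⟨p, hp⟩, by simp [famC]⟩, ?_, ?_, ?_⟩
  · intro j; exact Or.inl (by simp [famC])
  · intro j hj
    rcases Nat.lt_or_ge j p with h | h
    · exact Or.inr (Or.inr (Or.inr (by simp [famC]; omega)))
    · exact Or.inr (Or.inr (Or.inl fun j' hj' => by simp [famC]; omega))
  · intro j hj
    rcases Nat.lt_or_ge j p with h | h
    · exact Or.inl fun j' hj' => by simp [famC]; omega
    · exact Or.inr (Or.inr (Or.inr (by simp [famC]; omega)))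

theorem isBaxter_famD {k p : ℕ} (hp : p < k) : IsBaxter 2 k (famD k p) := by
  rw [isBaxter_two_iff]
  refine ⟨⟨⟨p, hp⟩, by simp [famD]⟩, ⟨⟨0, by omega⟩, by simp [famD]⟩, ?_, ?_, ?_⟩
  · intro j; exact Or.inr (by simp [famD])
  · intro j hj
    by_cases h : j + 1 = p
    · exact Or.inl fun j' hj' => by simp [famD]; omega
    · exact Or.inr (Or.inl (by simp [famD]; omega))
  · intro j hj
    by_cases h : j = p
    · exact Or.inr (Or.inr (Or.inl fun j' hj' => by simp [famD]; omega))
    · exact Or.inr (Or.inl (by simp [famD]; omega))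

theorem isBaxter_famE {k p : ℕ} (hp : p < k) : IsBaxter 2 k (famE k p) := by
  rw [isBaxter_two_iff]
  refine ⟨⟨⟨0, by omega⟩, by simp [famE]⟩, ⟨⟨p, hp⟩, by simp [famE]⟩, ?_, ?_, ?_⟩
  · intro j
    rcases Nat.lt_or_ge j.val p with h | h
    · exact Or.inl (by simp [famE]; omega)
    · exact Or.inr (by simp [famE]; omega)
  · intro j hj
    rcases Nat.lt_or_ge j p with h | h
    · exact Or.inr (Or.inr (Or.inr (by simp [famE]; omega)))
    · exact Or.inr (Or.inl (by simp [famE]; omega))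
  · intro j hj
    rcases Nat.lt_or_ge j p with h | h
    · exact Or.inl fun j' hj' => by simp [famE]; omega
    · exact Or.inr (Or.inr (Or.inl fun j' hj' => by simp [famE]; omega))

theorem isBaxter_famF {k p : ℕ} (hp : p < k) : IsBaxter 2 k (famF k p) := by
  rw [isBaxter_two_iff]
  refine ⟨⟨⟨p, hp⟩, by simp [famF]⟩, ⟨⟨0, by omega⟩, by simp [famF]⟩, ?_, ?_, ?_⟩
  · intro j
    rcases Nat.lt_or_ge j.val p with h | h
    · exact Or.inr (by simp [famF]; omega)
    · exact Or.inl (by simp [famF]; omega)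
  · intro j hj
    rcases Nat.lt_or_ge j p with h | h
    · exact Or.inl fun j' hj' => by simp [famF]; omega
    · exact Or.inr (Or.inr (Or.inl fun j' hj' => by simp [famF]; omega))
  · intro j hj
    rcases Nat.lt_or_ge j p with h | h
    · exact Or.inr (Or.inl (by simp [famF]; omega))
    · exact Or.inr (Or.inr (Or.inr (by simp [famF]; omega)))
def rowN {k : ℕ} (M : Fin 2 → Fin k → Bool) (i : Fin 2) (n : ℕ) : Bool :=
  if h : n < k then M i ⟨n, h⟩ else false

theorem rowN_lt {k : ℕ} (M : Fin 2 → Fin k → Bool) (i : Fin 2) {n : ℕ} (h : n < k) :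
    rowN M i n = M i ⟨n, h⟩ := dif_pos h

theorem rowN_bound {k : ℕ} {M : Fin 2 → Fin k → Bool} {i : Fin 2} {n : ℕ}
    (h : rowN M i n = true) : n < k := by
  by_contra hc
  rw [rowN, dif_neg hc] at h
  exact Bool.false_ne_true h

theorem rowN_fin {k : ℕ} (M : Fin 2 → Fin k → Bool) (i : Fin 2) (j : Fin k) :
    rowN M i j.val = M i j := by
  rw [rowN_lt M i j.isLt]

theorem matrix_eq_of_rowN {k : ℕ} {M N : Fin 2 → Fin k → Bool}
    (h : ∀ i : Fin 2, ∀ n : ℕ, n < k → rowN M i n = rowN N i n) : M = N := by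
  funext i j
  have := h i j.val j.isLt
  rwa [rowN_fin, rowN_fin] at this

theorem exists_flip (f : ℕ → Bool) :
    ∀ r q : ℕ, q ≤ r → f q = true → f r = false →
      ∃ j, q ≤ j ∧ j < r ∧ f j = true ∧ f (j + 1) = false := by
  intro r
  induction r with
  | zero =>
    intro q hq hfq hfr
    have : q = 0 := by omega
    subst this
    rw [hfq] at hfr
    exact absurd hfr (by simp)
  | succ r ih =>
    intro q hq hfq hfr
    rcases Nat.lt_or_ge q (r + 1) with h | h
    · cases hfr' : f r with
      | false =>
        obtain ⟨j, h1, h2, h3, h4⟩ := ih q (by omega) hfq hfr'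
        exact ⟨j, h1, by omega, h3, h4⟩
      | true => exact ⟨r, by omega, by omega, hfr', hfr⟩
    · have : q = r + 1 := by omega
      subst this
      rw [hfq] at hfr
      exact absurd hfr (by simp)
theorem classify {k : ℕ} (hk : 2 ≤ k) (M : Fin 2 → Fin k → Bool) (hB : IsBaxter 2 k M) :
    (∃ s e, 1 ≤ s ∧ s < e ∧ e ≤ k ∧ M = famA k s e) ∨
    (∃ s e, 1 ≤ s ∧ s < e ∧ e ≤ k ∧ M = famB k s e) ∨
    (∃ p, p < k ∧ M = famC k p) ∨
    (∃ p, p < k ∧ M = famD k p) ∨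
    (∃ p, 1 ≤ p ∧ p ≤ k - 2 ∧ M = famE k p) ∨
    (∃ p, 1 ≤ p ∧ p ≤ k - 2 ∧ M = famF k p) := by
  rw [isBaxter_two_iff] at hB
  obtain ⟨⟨j0, hj0⟩, ⟨j1, hj1⟩, hcol', hCW, hCCW⟩ := hB
  have hcol : ∀ n, n < k → rowN M 0 n = true ∨ rowN M 1 n = true := by
    intro n hn
    rw [rowN_lt M 0 hn, rowN_lt M 1 hn]
    exact hcol' ⟨n, hn⟩
  have hcw : ∀ j, j + 1 < k → (∃ x, x ≤ j ∧ rowN M 0 x = true) → rowN M 0 (j+1) = true →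
      (∃ y, j + 1 ≤ y ∧ rowN M 1 y = true) → rowN M 1 j = true → False := by
    rintro j hj ⟨x, hxj, hax⟩ ha1 ⟨y, hyj, hby⟩ hbj
    have hxk := rowN_bound hax
    have hyk := rowN_bound hby
    rw [rowN_lt M 0 hxk] at hax
    rw [rowN_lt M 0 hj] at ha1
    rw [rowN_lt M 1 hyk] at hby
    rw [rowN_lt M 1 (Nat.lt_of_succ_lt hj)] at hbj
    rcases hCW j hj with h | h | h | h
    · rw [h ⟨x, hxk⟩ hxj] at hax; exact Bool.false_ne_true hax
    · rw [h] at ha1; exact Bool.false_ne_true ha1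
    · rw [h ⟨y, hyk⟩ hyj] at hby; exact Bool.false_ne_true hby
    · rw [h] at hbj; exact Bool.false_ne_true hbj
  have hccw : ∀ j, j + 1 < k → (∃ x, x ≤ j ∧ rowN M 1 x = true) → rowN M 0 j = true →
      (∃ y, j + 1 ≤ y ∧ rowN M 0 y = true) → rowN M 1 (j+1) = true → False := by
    rintro j hj ⟨x, hxj, hbx⟩ haj ⟨y, hyj, hay⟩ hb1
    have hxk := rowN_bound hbx
    have hyk := rowN_bound hay
    rw [rowN_lt M 1 hxk] at hbx
    rw [rowN_lt M 0 (Nat.lt_of_succ_lt hj)] at haj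
    rw [rowN_lt M 0 hyk] at hay
    rw [rowN_lt M 1 hj] at hb1
    rcases hCCW j hj with h | h | h | h
    · rw [h ⟨x, hxk⟩ hxj] at hbx; exact Bool.false_ne_true hbx
    · rw [h] at haj; exact Bool.false_ne_true haj
    · rw [h ⟨y, hyk⟩ hyj] at hay; exact Bool.false_ne_true hay
    · rw [h] at hb1; exact Bool.false_ne_true hb1
  have hex0 : ∃ n, rowN M 0 n = true := ⟨j0.val, by rw [rowN_fin]; exact hj0⟩
  have hex1 : ∃ n, rowN M 1 n = true := ⟨j1.val, by rw [rowN_fin]; exact hj1⟩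
  by_cases hboth : ∃ c, rowN M 0 c = true ∧ rowN M 1 c = true
  · -- one column with two 1's
    obtain ⟨c, hac, hbc⟩ := hboth
    have hck := rowN_bound hac
    have hRight : (∀ y, c < y → rowN M 1 y = false) ∨ (∀ y, c < y → rowN M 0 y = false) := by
      by_contra hcon
      push_neg at hcon
      obtain ⟨⟨y1, hy1, hby1⟩, ⟨y2, hy2, hay2⟩⟩ := hcon
      simp only [ne_eq, Bool.not_eq_false] at hby1 hay2
      have h1k : c + 1 < k := by have := rowN_bound hby1; omega
      have hA1 : rowN M 0 (c+1) = false := by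
        by_contra h; rw [Bool.not_eq_false] at h
        exact hcw c h1k ⟨c, le_rfl, hac⟩ h ⟨y1, by omega, hby1⟩ hbc
      have hB1 : rowN M 1 (c+1) = false := by
        by_contra h; rw [Bool.not_eq_false] at h
        exact hccw c h1k ⟨c, le_rfl, hbc⟩ hac ⟨y2, by omega, hay2⟩ h
      rcases hcol (c+1) h1k with h | h
      · rw [hA1] at h; exact Bool.false_ne_true h
      · rw [hB1] at h; exact Bool.false_ne_true h
    have hLeft : (∀ x, x < c → rowN M 1 x = false) ∨ (∀ x, x < c → rowN M 0 x = false) := by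
      by_contra hcon
      push_neg at hcon
      obtain ⟨⟨x1, hx1, hbx1⟩, ⟨x2, hx2, hax2⟩⟩ := hcon
      simp only [ne_eq, Bool.not_eq_false] at hbx1 hax2
      have hceq : c - 1 + 1 = c := by omega
      have hck' : c - 1 + 1 < k := by omega
      have hA1 : rowN M 1 (c-1) = false := by
        by_contra h; rw [Bool.not_eq_false] at h
        exact hcw (c-1) hck' ⟨x2, by omega, hax2⟩ (by rw [hceq]; exact hac)
          ⟨c, by omega, hbc⟩ h
      have hA0 : rowN M 0 (c-1) = false := by
        by_contra h; rw [Bool.not_eq_false] at h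
        exact hccw (c-1) hck' ⟨x1, by omega, hbx1⟩ h ⟨c, by omega, hac⟩
          (by rw [hceq]; exact hbc)
      rcases hcol (c-1) (by omega) with h | h
      · rw [hA0] at h; exact Bool.false_ne_true h
      · rw [hA1] at h; exact Bool.false_ne_true h
    rcases hLeft with hL | hL <;> rcases hRight with hR | hR
    · -- row 1 = {c}, row 0 full : famC c
      refine Or.inr (Or.inr (Or.inl ⟨c, hck, ?_⟩))
      apply matrix_eq_of_rowN
      intro i n hn
      fin_cases i
      · show rowN M 0 n = rowN (famC k c) 0 n
        rw [rowN_lt (famC k c) 0 hn, show famC k c 0 ⟨n, hn⟩ = true by simp [famC]]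
        rcases Nat.lt_trichotomy n c with h | h | h
        · rcases hcol n hn with h' | h'
          · exact h'
          · rw [hL n h] at h'; exact absurd h' (by simp)
        · rw [h]; exact hac
        · rcases hcol n hn with h' | h'
          · exact h'
          · rw [hR n h] at h'; exact absurd h' (by simp)
      · show rowN M 1 n = rowN (famC k c) 1 n
        rw [rowN_lt (famC k c) 1 hn, show famC k c 1 ⟨n, hn⟩ = decide (n = c) by simp [famC]]
        rcases Nat.lt_trichotomy n c with h | h | h
        · rw [hL n h]; simp <;> omega
        · rw [h, hbc]; simp
        · rw [hR n h]; simp <;> omega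
    · -- row0 = [0,c], row1 = [c,k) : famE c (or famD 0 / famC (k-1))
      have hE0 : ∀ n, n < k → rowN M 0 n = decide (n ≤ c) := by
        intro n hn
        rcases Nat.lt_trichotomy n c with h | h | h
        · rcases hcol n hn with h' | h'
          · rw [h']; symm; simp; omega
          · rw [hL n h] at h'; exact absurd h' (by simp)
        · rw [h, hac]; simp
        · rw [hR n h]; symm; simp; omega
      have hE1 : ∀ n, n < k → rowN M 1 n = decide (c ≤ n) := by
        intro n hn
        rcases Nat.lt_trichotomy n c with h | h | h
        · rw [hL n h]; symm; simp; omega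
        · rw [h, hbc]; simp
        · rcases hcol n hn with h' | h'
          · rw [hR n h] at h'; exact absurd h' (by simp)
          · rw [h']; symm; simp; omega
      by_cases hc0 : c = 0
      · refine Or.inr (Or.inr (Or.inr (Or.inl ⟨0, by omega, ?_⟩)))
        apply matrix_eq_of_rowN
        intro i n hn
        fin_cases i
        · show rowN M 0 n = rowN (famD k 0) 0 n
          rw [rowN_lt (famD k 0) 0 hn, hE0 n hn, hc0]
          simp [famD, decide_eq_decide] <;> omega
        · show rowN M 1 n = rowN (famD k 0) 1 n
          rw [rowN_lt (famD k 0) 1 hn, hE1 n hn, hc0]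
          simp [famD, decide_eq_decide] <;> omega
      · by_cases hc1 : c = k - 1
        · refine Or.inr (Or.inr (Or.inl ⟨c, hck, ?_⟩))
          apply matrix_eq_of_rowN
          intro i n hn
          fin_cases i
          · show rowN M 0 n = rowN (famC k c) 0 n
            rw [rowN_lt (famC k c) 0 hn, hE0 n hn]
            simp [famC, decide_eq_decide] <;> omega
          · show rowN M 1 n = rowN (famC k c) 1 n
            rw [rowN_lt (famC k c) 1 hn, hE1 n hn]
            simp [famC, decide_eq_decide] <;> omega
        · refine Or.inr (Or.inr (Or.inr (Or.inr (Or.inl ⟨c, by omega, by omega, ?_⟩))))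
          apply matrix_eq_of_rowN
          intro i n hn
          fin_cases i
          · show rowN M 0 n = rowN (famE k c) 0 n
            rw [rowN_lt (famE k c) 0 hn, hE0 n hn]
            simp [famE, decide_eq_decide] <;> omega
          · show rowN M 1 n = rowN (famE k c) 1 n
            rw [rowN_lt (famE k c) 1 hn, hE1 n hn]
            simp [famE, decide_eq_decide] <;> omega
    · -- row0 = [c,k), row1 = [0,c] : famF c (or famC 0 / famD (k-1))
      have hE0 : ∀ n, n < k → rowN M 0 n = decide (c ≤ n) := by
        intro n hn
        rcases Nat.lt_trichotomy n c with h | h | h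
        · rw [hL n h]; symm; simp; omega
        · rw [h, hac]; simp
        · rcases hcol n hn with h' | h'
          · rw [h']; symm; simp; omega
          · rw [hR n h] at h'; exact absurd h' (by simp)
      have hE1 : ∀ n, n < k → rowN M 1 n = decide (n ≤ c) := by
        intro n hn
        rcases Nat.lt_trichotomy n c with h | h | h
        · rcases hcol n hn with h' | h'
          · rw [hL n h] at h'; exact absurd h' (by simp)
          · rw [h']; symm; simp; omega
        · rw [h, hbc]; simp
        · rw [hR n h]; symm; simp; omega
      by_cases hc0 : c = 0
      · refine Or.inr (Or.inr (Or.inl ⟨0, by omega, ?_⟩))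
        apply matrix_eq_of_rowN
        intro i n hn
        fin_cases i
        · show rowN M 0 n = rowN (famC k 0) 0 n
          rw [rowN_lt (famC k 0) 0 hn, hE0 n hn, hc0]
          simp [famC, decide_eq_decide] <;> omega
        · show rowN M 1 n = rowN (famC k 0) 1 n
          rw [rowN_lt (famC k 0) 1 hn, hE1 n hn, hc0]
          simp [famC, decide_eq_decide] <;> omega
      · by_cases hc1 : c = k - 1
        · refine Or.inr (Or.inr (Or.inr (Or.inl ⟨c, hck, ?_⟩)))
          apply matrix_eq_of_rowN
          intro i n hn
          fin_cases i
          · show rowN M 0 n = rowN (famD k c) 0 n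
            rw [rowN_lt (famD k c) 0 hn, hE0 n hn]
            simp [famD, decide_eq_decide] <;> omega
          · show rowN M 1 n = rowN (famD k c) 1 n
            rw [rowN_lt (famD k c) 1 hn, hE1 n hn]
            simp [famD, decide_eq_decide] <;> omega
        · refine Or.inr (Or.inr (Or.inr (Or.inr (Or.inr ⟨c, by omega, by omega, ?_⟩))))
          apply matrix_eq_of_rowN
          intro i n hn
          fin_cases i
          · show rowN M 0 n = rowN (famF k c) 0 n
            rw [rowN_lt (famF k c) 0 hn, hE0 n hn]
            simp [famF, decide_eq_decide] <;> omega
          · show rowN M 1 n = rowN (famF k c) 1 n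
            rw [rowN_lt (famF k c) 1 hn, hE1 n hn]
            simp [famF, decide_eq_decide] <;> omega
    · -- row0 = {c}, row1 full : famD c
      refine Or.inr (Or.inr (Or.inr (Or.inl ⟨c, hck, ?_⟩)))
      apply matrix_eq_of_rowN
      intro i n hn
      fin_cases i
      · show rowN M 0 n = rowN (famD k c) 0 n
        rw [rowN_lt (famD k c) 0 hn, show famD k c 0 ⟨n, hn⟩ = decide (n = c) by simp [famD]]
        rcases Nat.lt_trichotomy n c with h | h | h
        · rw [hL n h]; simp <;> omega
        · rw [h, hac]; simp
        · rw [hR n h]; simp <;> omega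
      · show rowN M 1 n = rowN (famD k c) 1 n
        rw [rowN_lt (famD k c) 1 hn, show famD k c 1 ⟨n, hn⟩ = true by simp [famD]]
        rcases Nat.lt_trichotomy n c with h | h | h
        · rcases hcol n hn with h' | h'
          · rw [hL n h] at h'; exact absurd h' (by simp)
          · exact h'
        · rw [h]; exact hbc
        · rcases hcol n hn with h' | h'
          · rw [hR n h] at h'; exact absurd h' (by simp)
          · exact h'
  · -- no column with two 1's
    have hd : ∀ n, ¬(rowN M 0 n = true ∧ rowN M 1 n = true) := fun n h => hboth ⟨n, h⟩
    have hcompl : ∀ n, n < k → rowN M 1 n = !rowN M 0 n := by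
      intro n hn
      cases h0 : rowN M 0 n with
      | false =>
        rcases hcol n hn with h | h
        · rw [h0] at h; exact absurd h (by simp)
        · rw [h]; rfl
      | true =>
        cases h1 : rowN M 1 n with
        | false => rfl
        | true => exact absurd ⟨h0, h1⟩ (hd n)
    have pat1 : ∀ p q r s, p < q → q < r → r < s →
        rowN M 0 p = true → rowN M 1 q = true → rowN M 0 r = true → rowN M 1 s = true → False := by
      intro p q r s hpq hqr hrs hap hbq har hbs
      have hsk := rowN_bound hbs
      have hbr : rowN M 1 r = false := by rw [hcompl r (by omega), har]; rfl
      obtain ⟨j, hqj, hjr, hbj, hbj1⟩ := exists_flip (rowN M 1) r q (by omega) hbq hbr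
      have hjk : j + 1 < k := by omega
      have haj1 : rowN M 0 (j+1) = true := by
        rcases hcol (j+1) hjk with h | h
        · exact h
        · rw [hbj1] at h; exact absurd h (by simp)
      exact hcw j hjk ⟨p, by omega, hap⟩ haj1 ⟨s, by omega, hbs⟩ hbj
    have pat2 : ∀ p q r s, p < q → q < r → r < s →
        rowN M 1 p = true → rowN M 0 q = true → rowN M 1 r = true → rowN M 0 s = true → False := by
      intro p q r s hpq hqr hrs hbp haq hbr has
      have hsk := rowN_bound has
      have har : rowN M 0 r = false := by
        have := hcompl r (by omega)
        rw [hbr] at this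
        cases h : rowN M 0 r
        · rfl
        · rw [h] at this; exact absurd this (by simp)
      obtain ⟨j, hqj, hjr, haj, haj1⟩ := exists_flip (rowN M 0) r q (by omega) haq har
      have hjk : j + 1 < k := by omega
      have hbj1 : rowN M 1 (j+1) = true := by
        rcases hcol (j+1) hjk with h | h
        · rw [haj1] at h; exact absurd h (by simp)
        · exact h
      exact hccw j hjk ⟨p, by omega, hbp⟩ haj ⟨s, by omega, has⟩ hbj1
    -- support of row 0 as a finset
    cases ha0 : rowN M 0 0 with
    | false =>
      -- column 0 is in row 1 only; row 0 is an interval [s,e] with s ≥ 1 : famA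
      have hb0 : rowN M 1 0 = true := by
        rcases hcol 0 (by omega) with h | h
        · rw [ha0] at h; exact absurd h (by simp)
        · exact h
      have hSne : ((Finset.range k).filter (fun n => rowN M 0 n = true)).Nonempty := by
        obtain ⟨n, hn⟩ := hex0
        exact ⟨n, Finset.mem_filter.2 ⟨Finset.mem_range.2 (rowN_bound hn), hn⟩⟩
      set S := (Finset.range k).filter (fun n => rowN M 0 n = true) with hS
      set s := S.min' hSne with hs
      set e := S.max' hSne with he
      have hsmem : s < k ∧ rowN M 0 s = true := by
        have h' : s ∈ (Finset.range k).filter (fun n => rowN M 0 n = true) := by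
          rw [← hS]; exact S.min'_mem hSne
        simpa [Finset.mem_filter, Finset.mem_range] using h'
      have hemem : e < k ∧ rowN M 0 e = true := by
        have h' : e ∈ (Finset.range k).filter (fun n => rowN M 0 n = true) := by
          rw [← hS]; exact S.max'_mem hSne
        simpa [Finset.mem_filter, Finset.mem_range] using h'
      have hmem : ∀ n, rowN M 0 n = true → s ≤ n ∧ n ≤ e := by
        intro n hn
        have hnS : n ∈ S := Finset.mem_filter.2 ⟨Finset.mem_range.2 (rowN_bound hn), hn⟩
        exact ⟨S.min'_le n hnS, S.le_max' n hnS⟩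
      have hs1 : 1 ≤ s := by
        rcases Nat.eq_zero_or_pos s with h | h
        · rw [h] at hsmem; rw [hsmem.2] at ha0; exact absurd ha0 (by simp)
        · exact h
      have hse : s ≤ e := (hmem e hemem.2).1
      have hfull : ∀ n, s ≤ n → n ≤ e → rowN M 0 n = true := by
        intro n hsn hne
        by_contra h
        rw [Bool.not_eq_true] at h
        have hnk : n < k := by omega
        have hbn : rowN M 1 n = true := by
          rcases hcol n hnk with h' | h'
          · rw [h] at h'; exact absurd h' (by simp)
          · exact h'
        have hns : s < n := by
          rcases Nat.lt_or_ge s n with h' | h'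
          · exact h'
          · have : s = n := by omega
            rw [← this, hsmem.2] at h; exact absurd h (by simp)
        have hne' : n < e := by
          rcases Nat.lt_or_ge n e with h' | h'
          · exact h'
          · have : n = e := by omega
            rw [this, hemem.2] at h; exact absurd h (by simp)
        exact pat2 0 s n e (by omega) (by omega) (by omega) hb0 hsmem.2 hbn hemem.2
      refine Or.inl ⟨s, e + 1, hs1, by omega, by omega, ?_⟩
      apply matrix_eq_of_rowN
      intro i n hn
      fin_cases i
      · show rowN M 0 n = rowN (famA k s (e+1)) 0 n
        rw [rowN_lt (famA k s (e+1)) 0 hn,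
          show famA k s (e+1) 0 ⟨n, hn⟩ = decide (s ≤ n ∧ n < e + 1) by simp [famA]]
        by_cases hcase : s ≤ n ∧ n ≤ e
        · rw [hfull n hcase.1 hcase.2]; symm; simp; omega
        · have hno : rowN M 0 n = false := by
            cases h' : rowN M 0 n
            · rfl
            · exact absurd (hmem n h') (by omega)
          rw [hno]; symm; simp; omega
      · show rowN M 1 n = rowN (famA k s (e+1)) 1 n
        rw [rowN_lt (famA k s (e+1)) 1 hn,
          show famA k s (e+1) 1 ⟨n, hn⟩ = !decide (s ≤ n ∧ n < e + 1) by simp [famA],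
          hcompl n hn]
        by_cases hcase : s ≤ n ∧ n ≤ e
        · rw [hfull n hcase.1 hcase.2]; symm; simp; omega
        · have hno : rowN M 0 n = false := by
            cases h' : rowN M 0 n
            · rfl
            · exact absurd (hmem n h') (by omega)
          rw [hno]; symm; simp; omega
    | true =>
      -- column 0 is in row 0 only; row 1 is an interval [s,e] with s ≥ 1 : famB
      have hb0 : rowN M 1 0 = false := by rw [hcompl 0 (by omega), ha0]; rfl
      have hSne : ((Finset.range k).filter (fun n => rowN M 1 n = true)).Nonempty := by
        obtain ⟨n, hn⟩ := hex1
        exact ⟨n, Finset.mem_filter.2 ⟨Finset.mem_range.2 (rowN_bound hn), hn⟩⟩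
      set S := (Finset.range k).filter (fun n => rowN M 1 n = true) with hS
      set s := S.min' hSne with hs
      set e := S.max' hSne with he
      have hsmem : s < k ∧ rowN M 1 s = true := by
        have h' : s ∈ (Finset.range k).filter (fun n => rowN M 1 n = true) := by
          rw [← hS]; exact S.min'_mem hSne
        simpa [Finset.mem_filter, Finset.mem_range] using h'
      have hemem : e < k ∧ rowN M 1 e = true := by
        have h' : e ∈ (Finset.range k).filter (fun n => rowN M 1 n = true) := by
          rw [← hS]; exact S.max'_mem hSne
        simpa [Finset.mem_filter, Finset.mem_range] using h'
      have hmem : ∀ n, rowN M 1 n = true → s ≤ n ∧ n ≤ e := by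
        intro n hn
        have hnS : n ∈ S := Finset.mem_filter.2 ⟨Finset.mem_range.2 (rowN_bound hn), hn⟩
        exact ⟨S.min'_le n hnS, S.le_max' n hnS⟩
      have hs1 : 1 ≤ s := by
        rcases Nat.eq_zero_or_pos s with h | h
        · rw [h] at hsmem; rw [hsmem.2] at hb0; exact absurd hb0 (by simp)
        · exact h
      have hse : s ≤ e := (hmem e hemem.2).1
      have hfull : ∀ n, s ≤ n → n ≤ e → rowN M 1 n = true := by
        intro n hsn hne
        by_contra h
        rw [Bool.not_eq_true] at h
        have hnk : n < k := by omega
        have han : rowN M 0 n = true := by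
          rcases hcol n hnk with h' | h'
          · exact h'
          · rw [h] at h'; exact absurd h' (by simp)
        have hns : s < n := by
          rcases Nat.lt_or_ge s n with h' | h'
          · exact h'
          · have : s = n := by omega
            rw [← this, hsmem.2] at h; exact absurd h (by simp)
        have hne' : n < e := by
          rcases Nat.lt_or_ge n e with h' | h'
          · exact h'
          · have : n = e := by omega
            rw [this, hemem.2] at h; exact absurd h (by simp)
        exact pat1 0 s n e (by omega) (by omega) (by omega) ha0 hsmem.2 han hemem.2
      have hcompl' : ∀ n, n < k → rowN M 0 n = !rowN M 1 n := by
        intro n hn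
        rw [hcompl n hn]
        cases rowN M 0 n <;> rfl
      refine Or.inr (Or.inl ⟨s, e + 1, hs1, by omega, by omega, ?_⟩)
      apply matrix_eq_of_rowN
      intro i n hn
      fin_cases i
      · show rowN M 0 n = rowN (famB k s (e+1)) 0 n
        rw [rowN_lt (famB k s (e+1)) 0 hn,
          show famB k s (e+1) 0 ⟨n, hn⟩ = !decide (s ≤ n ∧ n < e + 1) by simp [famB],
          hcompl' n hn]
        by_cases hcase : s ≤ n ∧ n ≤ e
        · rw [hfull n hcase.1 hcase.2]; symm; simp; omega
        · have hno : rowN M 1 n = false := by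
            cases h' : rowN M 1 n
            · rfl
            · exact absurd (hmem n h') (by omega)
          rw [hno]; symm; simp; omega
      · show rowN M 1 n = rowN (famB k s (e+1)) 1 n
        rw [rowN_lt (famB k s (e+1)) 1 hn,
          show famB k s (e+1) 1 ⟨n, hn⟩ = decide (s ≤ n ∧ n < e + 1) by simp [famB]]
        by_cases hcase : s ≤ n ∧ n ≤ e
        · rw [hfull n hcase.1 hcase.2]; symm; simp; omega
        · have hno : rowN M 1 n = false := by
            cases h' : rowN M 1 n
            · rfl
            · exact absurd (hmem n h') (by omega)
          rw [hno]; symm; simp; omega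
def PA (k : ℕ) : Finset ((_ : ℕ) × ℕ) := (Finset.Ico 1 k).sigma (fun s => Finset.Ico (s+1) (k+1))

theorem mem_PA {k : ℕ} {p : (_ : ℕ) × ℕ} :
    p ∈ PA k ↔ 1 ≤ p.1 ∧ p.1 < p.2 ∧ p.2 ≤ k := by
  rcases p with ⟨s, e⟩
  simp [PA, Finset.mem_sigma, Finset.mem_Ico]
  omega

theorem sum_tri : ∀ k : ℕ, (∑ s ∈ Finset.Ico 1 (k+1), (k+1-s)) * 2 = (k+1) * k := by
  intro k
  induction k with
  | zero => simp
  | succ k ih =>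
    rw [Finset.sum_Ico_succ_top (by omega)]
    have hstep : ∑ s ∈ Finset.Ico 1 (k+1), (k+1+1-s) = ∑ s ∈ Finset.Ico 1 (k+1), ((k+1-s) + 1) :=
      Finset.sum_congr rfl (fun s hs => by rw [Finset.mem_Ico] at hs; omega)
    have hsplit : ∑ s ∈ Finset.Ico 1 (k+1), ((k+1-s) + 1) = (∑ s ∈ Finset.Ico 1 (k+1), (k+1-s)) + k := by
      rw [Finset.sum_add_distrib]
      simp [Nat.card_Ico]
    rw [hstep, hsplit]
    have h2 : k+1+1-(k+1) = 1 := by omega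
    rw [h2]
    have : (∑ s ∈ Finset.Ico 1 (k+1), (k+1-s)) + k + 1 = (∑ s ∈ Finset.Ico 1 (k+1), (k+1-s)) + (k+1) := by omega
    rw [this, Nat.add_mul, ih]
    ring

theorem PA_card {k : ℕ} (hk : 1 ≤ k) : (PA k).card * 2 = k * (k-1) := by
  rw [PA, Finset.card_sigma]
  have h1 : ∀ s ∈ Finset.Ico 1 k, (Finset.Ico (s+1) (k+1)).card = k - s := by
    intro s hs
    rw [Nat.card_Ico]
    omega
  rw [Finset.sum_congr rfl h1]
  obtain ⟨k', rfl⟩ : ∃ k', k = k' + 1 := ⟨k - 1, by omega⟩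
  have := sum_tri k'
  have heq : ∑ s ∈ Finset.Ico 1 (k'+1), (k'+1-s) = ∑ s ∈ Finset.Ico 1 (k'+1), (k'+1-s) := rfl
  simpa using this

def target (k : ℕ) : Finset (Fin 2 → Fin k → Bool) :=
  ((PA k).image fun p => famA k p.1 p.2) ∪ ((PA k).image fun p => famB k p.1 p.2) ∪
  ((Finset.range k).image (famC k)) ∪ ((Finset.range k).image (famD k)) ∪
  ((Finset.Icc 1 (k-2)).image (famE k)) ∪ ((Finset.Icc 1 (k-2)).image (famF k))
section Inj
variable {k s e s' e' p p' : ℕ}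

theorem famA_inj (h2 : s < e) (h3 : e ≤ k) (h2' : s' < e') (h3' : e' ≤ k)
    (h : famA k s e = famA k s' e') : s = s' ∧ e = e' := by
  have q : ∀ n, n < k → ((s ≤ n ∧ n < e) ↔ (s' ≤ n ∧ n < e')) := by
    intro n hn
    have h' := congrFun (congrFun h 0) ⟨n, hn⟩
    simpa only [famA, Fin.val_zero, if_true, reduceIte, decide_eq_decide] using h'
  have q1 := (q s (by omega)).1 ⟨le_rfl, h2⟩
  have q2 := (q s' (by omega)).2 ⟨le_rfl, h2'⟩
  have q3 := (q (e-1) (by omega)).1 ⟨by omega, by omega⟩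
  have q4 := (q (e'-1) (by omega)).2 ⟨by omega, by omega⟩
  omega

theorem famB_inj (h2 : s < e) (h3 : e ≤ k) (h2' : s' < e') (h3' : e' ≤ k)
    (h : famB k s e = famB k s' e') : s = s' ∧ e = e' := by
  have q : ∀ n, n < k → ((s ≤ n ∧ n < e) ↔ (s' ≤ n ∧ n < e')) := by
    intro n hn
    have h' := congrFun (congrFun h 1) ⟨n, hn⟩
    simp only [famB, Fin.val_one] at h'
    rw [if_neg (by omega), if_neg (by omega)] at h'
    exact decide_eq_decide.1 h'
  have q1 := (q s (by omega)).1 ⟨le_rfl, h2⟩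
  have q2 := (q s' (by omega)).2 ⟨le_rfl, h2'⟩
  have q3 := (q (e-1) (by omega)).1 ⟨by omega, by omega⟩
  have q4 := (q (e'-1) (by omega)).2 ⟨by omega, by omega⟩
  omega

theorem famC_inj (hp : p < k) (h : famC k p = famC k p') : p = p' := by
  have := congrFun (congrFun h 1) ⟨p, hp⟩
  simpa [famC] using this

theorem famD_inj (hp : p < k) (h : famD k p = famD k p') : p = p' := by
  have := congrFun (congrFun h 0) ⟨p, hp⟩
  simpa [famD] using this

theorem famE_inj (hp : p < k) (hp' : p' < k) (h : famE k p = famE k p') : p = p' := by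
  have q1 := congrFun (congrFun h 1) ⟨p, hp⟩
  have q2 := congrFun (congrFun h 1) ⟨p', hp'⟩
  simp [famE] at q1 q2
  omega

theorem famF_inj (hp : p < k) (hp' : p' < k) (h : famF k p = famF k p') : p = p' := by
  have q1 := congrFun (congrFun h 0) ⟨p, hp⟩
  have q2 := congrFun (congrFun h 0) ⟨p', hp'⟩
  simp [famF] at q1 q2
  omega

end Inj
section Ne
variable {k s e s' e' p p' : ℕ}

theorem A_ne_B (hk : 2 ≤ k) (hs : 1 ≤ s) (hs' : 1 ≤ s') :
    famA k s e ≠ famB k s' e' := by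
  intro h
  have := congrFun (congrFun h 0) ⟨0, by omega⟩
  rw [Bool.eq_iff_iff] at this
  simp [famA, famB] at this
  omega

theorem A_ne_C (hk : 2 ≤ k) (hs : 1 ≤ s) : famA k s e ≠ famC k p := by
  intro h
  have := congrFun (congrFun h 0) ⟨0, by omega⟩
  rw [Bool.eq_iff_iff] at this
  simp [famA, famC] at this
  omega

theorem A_ne_D (hp : p < k) : famA k s e ≠ famD k p := by
  intro h
  have h0 := congrFun (congrFun h 0) ⟨p, hp⟩
  have h1 := congrFun (congrFun h 1) ⟨p, hp⟩
  rw [Bool.eq_iff_iff] at h0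
  rw [Bool.eq_iff_iff] at h1
  simp [famA, famD] at h0 h1
  omega

theorem A_ne_E (hk : 2 ≤ k) (hs : 1 ≤ s) : famA k s e ≠ famE k p := by
  intro h
  have := congrFun (congrFun h 0) ⟨0, by omega⟩
  rw [Bool.eq_iff_iff] at this
  simp [famA, famE] at this
  omega

theorem A_ne_F (hp : p < k) : famA k s e ≠ famF k p := by
  intro h
  have h0 := congrFun (congrFun h 0) ⟨p, hp⟩
  have h1 := congrFun (congrFun h 1) ⟨p, hp⟩
  rw [Bool.eq_iff_iff] at h0
  rw [Bool.eq_iff_iff] at h1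
  simp [famA, famF] at h0 h1
  omega

theorem B_ne_C (hp : p < k) : famB k s e ≠ famC k p := by
  intro h
  have h0 := congrFun (congrFun h 0) ⟨p, hp⟩
  have h1 := congrFun (congrFun h 1) ⟨p, hp⟩
  rw [Bool.eq_iff_iff] at h0
  rw [Bool.eq_iff_iff] at h1
  simp [famB, famC] at h0 h1
  omega

theorem B_ne_D (hk : 2 ≤ k) (hs : 1 ≤ s) : famB k s e ≠ famD k p := by
  intro h
  have := congrFun (congrFun h 1) ⟨0, by omega⟩
  rw [Bool.eq_iff_iff] at this
  simp [famB, famD] at this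
  omega

theorem B_ne_E (hp : p < k) : famB k s e ≠ famE k p := by
  intro h
  have h0 := congrFun (congrFun h 0) ⟨p, hp⟩
  have h1 := congrFun (congrFun h 1) ⟨p, hp⟩
  rw [Bool.eq_iff_iff] at h0
  rw [Bool.eq_iff_iff] at h1
  simp [famB, famE] at h0 h1
  omega

theorem B_ne_F (hk : 2 ≤ k) (hs : 1 ≤ s) : famB k s e ≠ famF k p := by
  intro h
  have := congrFun (congrFun h 1) ⟨0, by omega⟩
  rw [Bool.eq_iff_iff] at this
  simp [famB, famF] at this
  omega

theorem C_ne_D (hk : 2 ≤ k) (hp' : p' < k) : famC k p ≠ famD k p' := by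
  intro h
  by_cases h0 : p' = 0
  · have := congrFun (congrFun h 0) ⟨1, by omega⟩
    rw [Bool.eq_iff_iff] at this
    simp [famC, famD] at this
    omega
  · have := congrFun (congrFun h 0) ⟨0, by omega⟩
    rw [Bool.eq_iff_iff] at this
    simp [famC, famD] at this
    omega

theorem C_ne_E (hk : 2 ≤ k) (hp' : p' ≤ k - 2) : famC k p ≠ famE k p' := by
  intro h
  have := congrFun (congrFun h 0) ⟨k-1, by omega⟩
  rw [Bool.eq_iff_iff] at this
  simp [famC, famE] at this
  omega

theorem C_ne_F (hk : 2 ≤ k) (hp' : 1 ≤ p') : famC k p ≠ famF k p' := by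
  intro h
  have := congrFun (congrFun h 0) ⟨0, by omega⟩
  rw [Bool.eq_iff_iff] at this
  simp [famC, famF] at this
  omega

theorem D_ne_E (hk : 2 ≤ k) (hp' : 1 ≤ p') : famD k p ≠ famE k p' := by
  intro h
  have := congrFun (congrFun h 1) ⟨0, by omega⟩
  rw [Bool.eq_iff_iff] at this
  simp [famD, famE] at this
  omega

theorem D_ne_F (hk : 2 ≤ k) (hp' : p' ≤ k - 2) : famD k p ≠ famF k p' := by
  intro h
  have := congrFun (congrFun h 1) ⟨k-1, by omega⟩
  rw [Bool.eq_iff_iff] at this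
  simp [famD, famF] at this
  omega

theorem E_ne_F (hk : 2 ≤ k) (hp' : 1 ≤ p') : famE k p ≠ famF k p' := by
  intro h
  have := congrFun (congrFun h 0) ⟨0, by omega⟩
  rw [Bool.eq_iff_iff] at this
  simp [famE, famF] at this
  omega

end Ne

theorem target_iff {k : ℕ} (hk : 2 ≤ k) (M : Fin 2 → Fin k → Bool) :
    M ∈ target k ↔ IsBaxter 2 k M := by
  constructor
  · intro hM
    simp only [target, Finset.mem_union, Finset.mem_image] at hM
    rcases hM with ((((⟨p, hp, rfl⟩ | ⟨p, hp, rfl⟩) | ⟨p, hp, rfl⟩) | ⟨p, hp, rfl⟩) | ⟨p, hp, rfl⟩) | ⟨p, hp, rfl⟩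
    · rw [mem_PA] at hp; exact isBaxter_famA hp.1 hp.2.1 hp.2.2
    · rw [mem_PA] at hp; exact isBaxter_famB hp.1 hp.2.1 hp.2.2
    · rw [Finset.mem_range] at hp; exact isBaxter_famC hp
    · rw [Finset.mem_range] at hp; exact isBaxter_famD hp
    · rw [Finset.mem_Icc] at hp; exact isBaxter_famE (by omega)
    · rw [Finset.mem_Icc] at hp; exact isBaxter_famF (by omega)
  · intro hB
    simp only [target, Finset.mem_union, Finset.mem_image]
    rcases classify hk M hB with ⟨s, e, h1, h2, h3, rfl⟩ | ⟨s, e, h1, h2, h3, rfl⟩ |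
      ⟨p, h1, rfl⟩ | ⟨p, h1, rfl⟩ | ⟨p, h1, h2, rfl⟩ | ⟨p, h1, h2, rfl⟩
    · exact Or.inl (Or.inl (Or.inl (Or.inl (Or.inl ⟨⟨s, e⟩, mem_PA.2 ⟨h1, h2, h3⟩, rfl⟩))))
    · exact Or.inl (Or.inl (Or.inl (Or.inl (Or.inr ⟨⟨s, e⟩, mem_PA.2 ⟨h1, h2, h3⟩, rfl⟩))))
    · exact Or.inl (Or.inl (Or.inl (Or.inr ⟨p, Finset.mem_range.2 h1, rfl⟩)))
    · exact Or.inl (Or.inl (Or.inr ⟨p, Finset.mem_range.2 h1, rfl⟩))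
    · exact Or.inl (Or.inr ⟨p, Finset.mem_Icc.2 ⟨h1, h2⟩, rfl⟩)
    · exact Or.inr ⟨p, Finset.mem_Icc.2 ⟨h1, h2⟩, rfl⟩

theorem disjoint_image_of_ne {α γ β : Type*} [DecidableEq β] {S : Finset α} {T : Finset γ}
    {f : α → β} {g : γ → β} (h : ∀ a ∈ S, ∀ c ∈ T, f a ≠ g c) :
    Disjoint (S.image f) (T.image g) := by
  rw [Finset.disjoint_left]
  rintro M hM1 hM2
  obtain ⟨p, hp, rfl⟩ := Finset.mem_image.1 hM1
  obtain ⟨q, hq, heq⟩ := Finset.mem_image.1 hM2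
  exact h p hp q hq heq.symm

theorem target_card {k : ℕ} (hk : 2 ≤ k) :
    (target k).card = (PA k).card + (PA k).card + k + k + (k-2) + (k-2) := by
  have dAB : Disjoint ((PA k).image fun p => famA k p.1 p.2) ((PA k).image fun p => famB k p.1 p.2) :=
    disjoint_image_of_ne (fun p hp q hq => by
      rw [mem_PA] at hp hq; exact A_ne_B hk hp.1 hq.1)
  have dAC : Disjoint ((PA k).image fun p => famA k p.1 p.2) ((Finset.range k).image (famC k)) :=
    disjoint_image_of_ne (fun p hp q hq => by
      rw [mem_PA] at hp; exact A_ne_C hk hp.1)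
  have dBC : Disjoint ((PA k).image fun p => famB k p.1 p.2) ((Finset.range k).image (famC k)) :=
    disjoint_image_of_ne (fun p hp q hq => by
      rw [Finset.mem_range] at hq; exact B_ne_C hq)
  have dAD : Disjoint ((PA k).image fun p => famA k p.1 p.2) ((Finset.range k).image (famD k)) :=
    disjoint_image_of_ne (fun p hp q hq => by
      rw [Finset.mem_range] at hq; exact A_ne_D hq)
  have dBD : Disjoint ((PA k).image fun p => famB k p.1 p.2) ((Finset.range k).image (famD k)) :=
    disjoint_image_of_ne (fun p hp q hq => by
      rw [mem_PA] at hp; exact B_ne_D hk hp.1)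
  have dCD : Disjoint ((Finset.range k).image (famC k)) ((Finset.range k).image (famD k)) :=
    disjoint_image_of_ne (fun p hp q hq => by
      rw [Finset.mem_range] at hq; exact C_ne_D hk hq)
  have dAE : Disjoint ((PA k).image fun p => famA k p.1 p.2) ((Finset.Icc 1 (k-2)).image (famE k)) :=
    disjoint_image_of_ne (fun p hp q hq => by
      rw [mem_PA] at hp; exact A_ne_E hk hp.1)
  have dBE : Disjoint ((PA k).image fun p => famB k p.1 p.2) ((Finset.Icc 1 (k-2)).image (famE k)) :=
    disjoint_image_of_ne (fun p hp q hq => by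
      rw [Finset.mem_Icc] at hq; exact B_ne_E (by omega))
  have dCE : Disjoint ((Finset.range k).image (famC k)) ((Finset.Icc 1 (k-2)).image (famE k)) :=
    disjoint_image_of_ne (fun p hp q hq => by
      rw [Finset.mem_Icc] at hq; exact C_ne_E hk hq.2)
  have dDE : Disjoint ((Finset.range k).image (famD k)) ((Finset.Icc 1 (k-2)).image (famE k)) :=
    disjoint_image_of_ne (fun p hp q hq => by
      rw [Finset.mem_Icc] at hq; exact D_ne_E hk hq.1)
  have dAF : Disjoint ((PA k).image fun p => famA k p.1 p.2) ((Finset.Icc 1 (k-2)).image (famF k)) :=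
    disjoint_image_of_ne (fun p hp q hq => by
      rw [Finset.mem_Icc] at hq; exact A_ne_F (by omega))
  have dBF : Disjoint ((PA k).image fun p => famB k p.1 p.2) ((Finset.Icc 1 (k-2)).image (famF k)) :=
    disjoint_image_of_ne (fun p hp q hq => by
      rw [mem_PA] at hp; exact B_ne_F hk hp.1)
  have dCF : Disjoint ((Finset.range k).image (famC k)) ((Finset.Icc 1 (k-2)).image (famF k)) :=
    disjoint_image_of_ne (fun p hp q hq => by
      rw [Finset.mem_Icc] at hq; exact C_ne_F hk hq.1)
  have dDF : Disjoint ((Finset.range k).image (famD k)) ((Finset.Icc 1 (k-2)).image (famF k)) :=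
    disjoint_image_of_ne (fun p hp q hq => by
      rw [Finset.mem_Icc] at hq; exact D_ne_F hk hq.2)
  have dEF : Disjoint ((Finset.Icc 1 (k-2)).image (famE k)) ((Finset.Icc 1 (k-2)).image (famF k)) :=
    disjoint_image_of_ne (fun p hp q hq => by
      rw [Finset.mem_Icc] at hq; exact E_ne_F hk hq.1)
  have hdC := Finset.disjoint_union_left.2 ⟨dAC, dBC⟩
  have hdD := Finset.disjoint_union_left.2 ⟨Finset.disjoint_union_left.2 ⟨dAD, dBD⟩, dCD⟩
  have hdE := Finset.disjoint_union_left.2 ⟨Finset.disjoint_union_left.2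
    ⟨Finset.disjoint_union_left.2 ⟨dAE, dBE⟩, dCE⟩, dDE⟩
  have hdF := Finset.disjoint_union_left.2 ⟨Finset.disjoint_union_left.2
    ⟨Finset.disjoint_union_left.2 ⟨Finset.disjoint_union_left.2 ⟨dAF, dBF⟩, dCF⟩, dDF⟩, dEF⟩
  rw [target, Finset.card_union_of_disjoint hdF, Finset.card_union_of_disjoint hdE,
    Finset.card_union_of_disjoint hdD, Finset.card_union_of_disjoint hdC,
    Finset.card_union_of_disjoint dAB]
  have cA : ((PA k).image fun p => famA k p.1 p.2).card = (PA k).card := by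
    apply Finset.card_image_of_injOn
    intro p hp q hq h
    rw [Finset.mem_coe, mem_PA] at hp hq
    obtain ⟨h1, h2⟩ := famA_inj hp.2.1 hp.2.2 hq.2.1 hq.2.2 h
    rcases p with ⟨ps, pe⟩; rcases q with ⟨qs, qe⟩
    simp at h1 h2 ⊢
    exact ⟨h1, h2⟩
  have cB : ((PA k).image fun p => famB k p.1 p.2).card = (PA k).card := by
    apply Finset.card_image_of_injOn
    intro p hp q hq h
    rw [Finset.mem_coe, mem_PA] at hp hq
    obtain ⟨h1, h2⟩ := famB_inj hp.2.1 hp.2.2 hq.2.1 hq.2.2 h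
    rcases p with ⟨ps, pe⟩; rcases q with ⟨qs, qe⟩
    simp at h1 h2 ⊢
    exact ⟨h1, h2⟩
  have cC : ((Finset.range k).image (famC k)).card = k := by
    rw [Finset.card_image_of_injOn, Finset.card_range]
    intro p hp q hq h
    rw [Finset.mem_coe, Finset.mem_range] at hp
    exact famC_inj hp h
  have cD : ((Finset.range k).image (famD k)).card = k := by
    rw [Finset.card_image_of_injOn, Finset.card_range]
    intro p hp q hq h
    rw [Finset.mem_coe, Finset.mem_range] at hp
    exact famD_inj hp h
  have cE : ((Finset.Icc 1 (k-2)).image (famE k)).card = k - 2 := by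
    have hinj : Set.InjOn (famE k) (Finset.Icc 1 (k-2)) := by
      intro p hp q hq h
      rw [Finset.mem_coe, Finset.mem_Icc] at hp hq
      exact famE_inj (by omega) (by omega) h
    rw [Finset.card_image_of_injOn hinj, Nat.card_Icc]
    omega
  have cF : ((Finset.Icc 1 (k-2)).image (famF k)).card = k - 2 := by
    have hinj : Set.InjOn (famF k) (Finset.Icc 1 (k-2)) := by
      intro p hp q hq h
      rw [Finset.mem_coe, Finset.mem_Icc] at hp hq
      exact famF_inj (by omega) (by omega) h
    rw [Finset.card_image_of_injOn hinj, Nat.card_Icc]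
    omega
  rw [cA, cB, cC, cD, cE, cF]


theorem baxterCount_two_rows (k : ℕ) (hk : 2 ≤ k) :
    (baxterCount 2 k : ℚ) = (k : ℚ)^2 + 3*(k : ℚ) - 4 := by
  classical
  have h1 : baxterCount 2 k = (Finset.univ.filter (fun M => IsBaxter 2 k M)).card := by
    rw [baxterCount, Nat.card_eq_fintype_card, Fintype.card_subtype]
  have h2 : (Finset.univ.filter (fun M => IsBaxter 2 k M)) = target k := by
    ext M
    simp only [Finset.mem_filter, Finset.mem_univ, true_and]
    exact (target_iff hk M).symm
  have h4 := PA_card (k := k) (by omega)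
  rw [h1, h2, target_card hk]
  have hcast : ((PA k).card : ℚ) * 2 = (k : ℚ) * ((k : ℚ) - 1) := by
    calc ((PA k).card : ℚ) * 2 = (((PA k).card * 2 : ℕ) : ℚ) := by push_cast; ring
    _ = ((k * (k-1) : ℕ) : ℚ) := by exact_mod_cast congrArg (fun n : ℕ => (n : ℚ)) h4
    _ = (k : ℚ) * ((k : ℚ) - 1) := by push_cast [Nat.cast_sub (show 1 ≤ k by omega)]; ring
  push_cast [Nat.cast_sub hk]
  linear_combination hcast
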